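/- Let A be a regular sequence-admitting setting: in a commutative Noetherian ring R, let x_1, ..., x_r be a regular sequence. Then for every k ≥ 1, (x_1^k, ..., x_r^k) : (x_1 x_2 ⋯ x_r)^{k-1} = (x_1, ..., x_r). -/

import Mathlib

open Ideal IsLocalRing

section Prelim

variable {R : Type*} [CommRing R]

/-- The Frobenius power `I^{[q]}`: the ideal generated by `q`-th powers of elements of `I`. -/
def frobeniusPower (I : Ideal R) (q : ℕ) : Ideal R :=
  Ideal.span ((fun a => a ^ q) '' (I : Set R))

/-- The Frobenius closure `I^F = {x | x^{p^e} ∈ I^{[p^e]} for some e}`. -/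
def frobeniusClosure (p : ℕ) (I : Ideal R) : Ideal R :=
  Ideal.span {x : R | ∃ e : ℕ, x ^ p ^ e ∈ frobeniusPower I (p ^ e)}

/-- `I` is Frobenius closed if `I^F = I`. -/
def IsFrobeniusClosed (p : ℕ) (I : Ideal R) : Prop :=
  frobeniusClosure p I = I

/-- The ideal generated by the entries of `x` before index `i`. -/
def prevSpan {n : ℕ} (x : Fin n → R) (i : Fin n) : Ideal R :=
  Ideal.span (x '' {j : Fin n | j < i})

/-- `x` is a d-sequence. -/
def IsDSequence {n : ℕ} (x : Fin n → R) : Prop :=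
  ∀ i j : Fin n, i ≤ j →
    (prevSpan x i).colon (Ideal.span {x i * x j}) = (prevSpan x i).colon (Ideal.span {x j})

/-- `x` is a (full) system of parameters of the local ring `R`. -/
def IsSOP [IsLocalRing R] {n : ℕ} (x : Fin n → R) : Prop :=
  ringKrullDim R = n ∧
    (Ideal.span (Set.range x)).radical = IsLocalRing.maximalIdeal R

/-- `x` is part of a system of parameters. -/
def IsPartialSOP [IsLocalRing R] {t : ℕ} (x : Fin t → R) : Prop :=
  ∃ (n : ℕ) (h : t ≤ n) (y : Fin n → R), IsSOP y ∧ ∀ i : Fin t, y (Fin.castLE h i) = x i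

/-- `x` is a regular sequence on `R`. -/
def IsRegSeq {r : ℕ} (x : Fin r → R) : Prop :=
  Ideal.span (Set.range x) ≠ ⊤ ∧
    ∀ i : Fin r, ∀ y : R, y * x i ∈ prevSpan x i → y ∈ prevSpan x i

end Prelim

namespace ColonRegAux

open MvPolynomial

variable {R : Type*} [CommRing R] {c : ℕ}

/-- Span of the first `t` entries of the sequence. -/
def Jt (x : Fin c → R) (t : ℕ) : Ideal R := Ideal.span (x '' {j : Fin c | (j : ℕ) < t})

/-- All variables occurring in `F` have index `< t`. -/
def VarsLt (t : ℕ) (F : MvPolynomial (Fin c) R) : Prop :=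
  ∀ d : Fin c →₀ ℕ, MvPolynomial.coeff d F ≠ 0 → ∀ j : Fin c, d j ≠ 0 → (j : ℕ) < t

variable (x : Fin c → R)

lemma Jt_mono {t t' : ℕ} (h : t ≤ t') : Jt x t ≤ Jt x t' :=
  Ideal.span_mono (Set.image_mono fun j hj => lt_of_lt_of_le hj h)

lemma x_mem_Jt {j : Fin c} {t : ℕ} (hj : (j : ℕ) < t) : x j ∈ Jt x t :=
  Ideal.subset_span ⟨j, hj, rfl⟩

lemma Jt_c_eq : Jt x c = Ideal.span (Set.range x) := by
  unfold Jt
  rw [show {j : Fin c | (j : ℕ) < c} = Set.univ from Set.eq_univ_of_forall fun j => j.isLt,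
    Set.image_univ]

lemma prevSpan_eq_Jt {t : ℕ} (ht : t < c) : prevSpan x ⟨t, ht⟩ = Jt x t := rfl

lemma degree_eq_sum (d : Fin c →₀ ℕ) : d.degree = ∑ j, d j :=
  Finset.sum_subset (Finset.subset_univ _) fun j _ hj => Finsupp.notMem_support_iff.mp hj

lemma degree_single (j : Fin c) (m : ℕ) : (Finsupp.single j m).degree = m := by
  rw [degree_eq_sum]
  rw [Finset.sum_eq_single j (fun b _ hb => Finsupp.single_eq_of_ne' (Ne.symm hb))
    (fun h => absurd (Finset.mem_univ j) h)]
  exact Finsupp.single_eq_same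

lemma degree_add (a b : Fin c →₀ ℕ) : (a + b).degree = a.degree + b.degree := by
  simp [degree_eq_sum, Finset.sum_add_distrib]

lemma degree_sub_single {d : Fin c →₀ ℕ} {j : Fin c} (h : d j ≠ 0) :
    (d - Finsupp.single j 1).degree + 1 = d.degree := by
  have hrec : Finsupp.single j 1 + (d - Finsupp.single j 1) = d := by
    ext i
    rcases eq_or_ne i j with rfl | hij
    · simp only [Finsupp.add_apply, Finsupp.single_eq_same, Finsupp.tsub_apply]
      omega
    · simp [Finsupp.single_eq_of_ne' (Ne.symm hij), Finsupp.tsub_apply]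
  conv_rhs => rw [← hrec]
  rw [degree_add, degree_single, add_comm]

lemma hom_degree {F : MvPolynomial (Fin c) R} {m : ℕ} {d : Fin c →₀ ℕ}
    (hF : F.IsHomogeneous m) (h : MvPolynomial.coeff d F ≠ 0) : d.degree = m := by
  by_contra hne; exact h (hF.coeff_eq_zero hne)

/- VarsLt closure lemmas -/

lemma varsLt_mono {t t' : ℕ} {F : MvPolynomial (Fin c) R} (h : t ≤ t')
    (hF : VarsLt t F) : VarsLt t' F :=
  fun d hd j hj => lt_of_lt_of_le (hF d hd j hj) h

lemma varsLt_add {t : ℕ} {F G : MvPolynomial (Fin c) R}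
    (hF : VarsLt t F) (hG : VarsLt t G) : VarsLt t (F + G) := by
  intro d hd j hj
  by_cases h1 : MvPolynomial.coeff d F = 0
  · refine hG d (fun h2 => hd ?_) j hj
    rw [MvPolynomial.coeff_add, h1, h2, add_zero]
  · exact hF d h1 j hj

lemma varsLt_sub {t : ℕ} {F G : MvPolynomial (Fin c) R}
    (hF : VarsLt t F) (hG : VarsLt t G) : VarsLt t (F - G) := by
  intro d hd j hj
  by_cases h1 : MvPolynomial.coeff d F = 0
  · refine hG d (fun h2 => hd ?_) j hj
    rw [MvPolynomial.coeff_sub, h1, h2, sub_zero]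
  · exact hF d h1 j hj

lemma varsLt_C_mul {t : ℕ} {F : MvPolynomial (Fin c) R} (a : R)
    (hF : VarsLt t F) : VarsLt t (C a * F) := by
  intro d hd j hj
  refine hF d (fun h => hd ?_) j hj
  rw [MvPolynomial.coeff_C_mul, h, mul_zero]

lemma varsLt_C {t : ℕ} (a : R) : VarsLt t (C a : MvPolynomial (Fin c) R) := by
  intro d hd j hj
  by_cases h0 : d = 0
  · subst h0; exact absurd rfl hj
  · exact absurd (by rw [MvPolynomial.coeff_C, if_neg (fun h => h0 h.symm)]) hd

lemma varsLt_X {t : ℕ} {j0 : Fin c} (h : (j0 : ℕ) < t) :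
    VarsLt t (X j0 : MvPolynomial (Fin c) R) := by
  intro d hd j hj
  by_cases heq : Finsupp.single j0 1 = d
  · subst heq
    by_cases hjj : j0 = j
    · subst hjj; exact h
    · exact absurd (Finsupp.single_eq_of_ne' hjj) hj
  · exact absurd (by rw [MvPolynomial.coeff_X', if_neg heq]) hd

lemma varsLt_mul {t : ℕ} {F G : MvPolynomial (Fin c) R}
    (hF : VarsLt t F) (hG : VarsLt t G) : VarsLt t (F * G) := by
  classical
  intro d hd j hj
  have hmem := MvPolynomial.support_mul F G (MvPolynomial.mem_support_iff.mpr hd)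
  obtain ⟨d1, hd1, d2, hd2, rfl⟩ := Finset.mem_add.mp hmem
  rw [Finsupp.add_apply] at hj
  by_cases h1 : d1 j = 0
  · have h2 : d2 j ≠ 0 := by omega
    exact hG d2 (MvPolynomial.mem_support_iff.mp hd2) j h2
  · exact hF d1 (MvPolynomial.mem_support_iff.mp hd1) j h1

/-- Values of homogeneous forms of degree `s` in the first `t` variables. -/
def formIdeal (x : Fin c → R) (t s : ℕ) : Ideal R where
  carrier := {y | ∃ F : MvPolynomial (Fin c) R,
    F.IsHomogeneous s ∧ VarsLt t F ∧ MvPolynomial.eval x F = y}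
  zero_mem' := ⟨0, MvPolynomial.isHomogeneous_zero _ _ _,
    fun d hd => absurd (MvPolynomial.coeff_zero d) hd, _root_.map_zero _⟩
  add_mem' := by
    rintro a b ⟨F, hF, hvF, rfl⟩ ⟨G, hG, hvG, rfl⟩
    exact ⟨F + G, hF.add hG, varsLt_add hvF hvG, _root_.map_add _ _ _⟩
  smul_mem' := by
    rintro r a ⟨F, hF, hv, rfl⟩
    exact ⟨C r * F, by simpa using (MvPolynomial.isHomogeneous_C _ r).mul hF,
      varsLt_C_mul r hv, by rw [smul_eq_mul, _root_.map_mul, _root_.MvPolynomial.eval_C]⟩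

lemma pow_le_formIdeal (t s : ℕ) : Jt x t ^ s ≤ formIdeal x t s := by
  induction s with
  | zero =>
    rw [pow_zero, Ideal.one_eq_top]
    intro y _
    exact ⟨C y, MvPolynomial.isHomogeneous_C _ _, varsLt_C _, _root_.MvPolynomial.eval_C _⟩
  | succ s IH =>
    rw [pow_succ]
    refine Ideal.mul_le.mpr fun a ha b hb => ?_
    obtain ⟨F, hF, hvF, rfl⟩ := IH ha
    have hle : Jt x t ≤ formIdeal x t 1 := by
      rw [Jt, Ideal.span_le]
      rintro _ ⟨j, hj, rfl⟩
      exact ⟨X j, MvPolynomial.isHomogeneous_X _ _, varsLt_X hj, MvPolynomial.eval_X _⟩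
    obtain ⟨G, hG, hvG, rfl⟩ := hle hb
    exact ⟨F * G, hF.mul hG, varsLt_mul hvF hvG, _root_.map_mul _ _ _⟩

lemma prod_pow_mem {J : Ideal R} (d : Fin c → ℕ) (s : Finset (Fin c))
    (h : ∀ j ∈ s, x j ∈ J) :
    (∏ j ∈ s, x j ^ d j) ∈ J ^ (∑ j ∈ s, d j) := by
  classical
  induction s using Finset.induction with
  | empty => simp [Ideal.one_eq_top]
  | @insert a s ha IH =>
    rw [Finset.prod_insert ha, Finset.sum_insert ha, pow_add]
    exact Ideal.mul_mem_mul (Ideal.pow_mem_pow (h a (Finset.mem_insert_self _ _)) _)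
      (IH fun j hj => h j (Finset.mem_insert_of_mem hj))

lemma eval_mem_mul {K : Ideal R} {t m : ℕ} {F : MvPolynomial (Fin c) R}
    (hF : F.IsHomogeneous m) (hv : VarsLt t F) (hc : ∀ d, MvPolynomial.coeff d F ∈ K) :
    MvPolynomial.eval x F ∈ K * Jt x t ^ m := by
  rw [MvPolynomial.eval_eq]
  refine Ideal.sum_mem _ fun d hd => ?_
  have hdeg : ∑ j ∈ d.support, d j = m :=
    hom_degree hF (MvPolynomial.mem_support_iff.mp hd)
  rw [← hdeg]
  exact Ideal.mul_mem_mul (hc d) (prod_pow_mem x d d.support fun j hj =>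
    x_mem_Jt x (hv d (MvPolynomial.mem_support_iff.mp hd) j (Finsupp.mem_support_iff.mp hj)))

lemma eval_mem {t m : ℕ} {F : MvPolynomial (Fin c) R}
    (hF : F.IsHomogeneous m) (hv : VarsLt t F) :
    MvPolynomial.eval x F ∈ Jt x t ^ m := by
  have := eval_mem_mul x (K := ⊤) hF hv (fun d => Submodule.mem_top)
  rwa [Ideal.top_mul] at this

lemma eval_of_support_subset_zero {F : MvPolynomial (Fin c) R}
    (h : F.support ⊆ {0}) : MvPolynomial.eval x F = MvPolynomial.coeff 0 F := by
  rcases Finset.subset_singleton_iff.mp h with h0 | h0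
  · have : F = 0 := MvPolynomial.support_eq_empty.mp h0
    simp [this]
  · rw [MvPolynomial.eval_eq, h0, Finset.sum_singleton]
    simp

lemma Wlem (hreg : IsRegSeq x) {t : ℕ} (ht : t < c)
    (hQR : ∀ (dg : ℕ) (F : MvPolynomial (Fin c) R), F.IsHomogeneous dg → VarsLt t F →
      MvPolynomial.eval x F ∈ Jt x t ^ (dg + 1) → ∀ d, MvPolynomial.coeff d F ∈ Jt x t) :
    ∀ (s : ℕ) (y : R), x ⟨t, ht⟩ * y ∈ Jt x t ^ s → y ∈ Jt x t ^ s := by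
  intro s
  induction s with
  | zero => intro y _; rw [pow_zero, Ideal.one_eq_top]; exact Submodule.mem_top
  | succ s IH =>
    intro y hy
    have hys : y ∈ Jt x t ^ s := IH y (Ideal.pow_le_pow_right (Nat.le_succ s) hy)
    obtain ⟨G, hG, hvG, hGe⟩ := pow_le_formIdeal x t s hys
    have hcoeff : ∀ d, MvPolynomial.coeff d (C (x ⟨t, ht⟩) * G) ∈ Jt x t := by
      refine hQR s _ ?_ (varsLt_C_mul _ hvG) ?_
      · simpa using (MvPolynomial.isHomogeneous_C _ (x ⟨t, ht⟩)).mul hG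
      · rw [_root_.map_mul, _root_.MvPolynomial.eval_C, hGe]; exact hy
    have hcG : ∀ d, MvPolynomial.coeff d G ∈ Jt x t := by
      intro d
      have h := hcoeff d
      rw [MvPolynomial.coeff_C_mul] at h
      have h2 := hreg.2 ⟨t, ht⟩ (MvPolynomial.coeff d G)
        (by rw [prevSpan_eq_Jt x ht, mul_comm]; exact h)
      rwa [prevSpan_eq_Jt x ht] at h2
    have hfin := eval_mem_mul x hG hvG hcG
    rw [hGe, ← pow_succ'] at hfin
    exact hfin

theorem quasiReg (hreg : IsRegSeq x) :
    ∀ t : ℕ, t ≤ c → ∀ (dg : ℕ) (F : MvPolynomial (Fin c) R),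
      F.IsHomogeneous dg → VarsLt t F →
      MvPolynomial.eval x F ∈ Jt x t ^ (dg + 1) → ∀ d, MvPolynomial.coeff d F ∈ Jt x t := by
  intro t
  induction t with
  | zero =>
    intro _ dg F hF hv hev d
    by_cases hc : MvPolynomial.coeff d F = 0
    · rw [hc]; exact zero_mem _
    have hd0 : d = 0 := by
      ext j
      by_contra hj
      exact Nat.not_lt_zero _ (hv d hc j hj)
    subst hd0
    have hsup : F.support ⊆ {0} := by
      intro e he
      rw [Finset.mem_singleton]
      ext j
      by_contra hj
      exact Nat.not_lt_zero _ (hv e (MvPolynomial.mem_support_iff.mp he) j hj)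
    have heval := eval_of_support_subset_zero x hsup
    have hle : Jt x 0 ^ (dg + 1) ≤ Jt x 0 := by
      have h1 := Ideal.pow_le_pow_right (I := Jt x 0) (show 1 ≤ dg + 1 by omega)
      rwa [pow_one] at h1
    exact hle (heval ▸ hev)
  | succ t IHt =>
    intro htc
    have ht : t < c := Nat.lt_of_succ_le htc
    have IH := IHt (Nat.le_of_lt ht)
    have hW := Wlem x hreg ht (fun dg F hF hv hev => IH dg F hF hv hev)
    have hIJK : Jt x (t + 1) = Jt x t ⊔ Ideal.span {x ⟨t, ht⟩} := by
      have hset : {j : Fin c | (j : ℕ) < t + 1} =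
          {j : Fin c | (j : ℕ) < t} ∪ {(⟨t, ht⟩ : Fin c)} := by
        ext j
        simp only [Set.mem_setOf_eq, Set.mem_union, Set.mem_singleton_iff]
        constructor
        · intro h
          rcases Nat.lt_or_ge (j : ℕ) t with h' | h'
          · exact Or.inl h'
          · exact Or.inr (Fin.ext (show (j : ℕ) = t by omega))
        · rintro (h | rfl)
          · omega
          · exact Nat.lt_succ_self t
      unfold Jt
      rw [hset, Set.image_union, Set.image_singleton, Ideal.span_union]
    have P1 : ∀ s : ℕ, Jt x (t + 1) ^ (s + 1) ≤
        Jt x t ^ (s + 1) ⊔ Ideal.span {x ⟨t, ht⟩} * Jt x (t + 1) ^ s := by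
      intro s
      induction s with
      | zero =>
        rw [pow_one, pow_one, pow_zero, mul_one, hIJK]
      | succ s IHs =>
        calc Jt x (t + 1) ^ (s + 1 + 1) = Jt x (t + 1) ^ (s + 1) * Jt x (t + 1) := pow_succ _ _
          _ ≤ (Jt x t ^ (s + 1) ⊔ Ideal.span {x ⟨t, ht⟩} * Jt x (t + 1) ^ s) * Jt x (t + 1) :=
            Ideal.mul_mono_left IHs
          _ ≤ Jt x t ^ (s + 1 + 1) ⊔ Ideal.span {x ⟨t, ht⟩} * Jt x (t + 1) ^ (s + 1) := by
            rw [Ideal.sup_mul]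
            refine sup_le ?_ ?_
            · refine le_trans (Ideal.mul_mono_right (le_of_eq hIJK)) ?_
              rw [Ideal.mul_sup]
              refine sup_le ?_ ?_
              · rw [← pow_succ]
                exact le_sup_left
              · rw [mul_comm]
                exact le_sup_of_le_right (Ideal.mul_mono_right
                  (Ideal.pow_right_mono (Jt_mono x (Nat.le_succ t)) _))
            · rw [mul_assoc, ← pow_succ]
              exact le_sup_right
    intro dg
    induction dg with
    | zero =>
      intro F hF hv hev d
      by_cases hc : MvPolynomial.coeff d F = 0
      · rw [hc]; exact zero_mem _
      have hd0 : d = 0 := (Finsupp.degree_eq_zero_iff d).mp (hom_degree hF hc)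
      subst hd0
      have hsup : F.support ⊆ {0} := fun e he => Finset.mem_singleton.mpr
        ((Finsupp.degree_eq_zero_iff e).mp (hom_degree hF (MvPolynomial.mem_support_iff.mp he)))
      have heval := eval_of_support_subset_zero x hsup
      have hle : Jt x (t + 1) ^ (0 + 1) ≤ Jt x (t + 1) := by rw [zero_add, pow_one]
      exact hle (heval ▸ hev)
    | succ dg IHdg =>
      intro F hF hv hev
      classical
      set tt : Fin c := ⟨t, ht⟩ with htt
      set G : MvPolynomial (Fin c) R :=
        ∑ d ∈ F.support.filter (fun d => d tt = 0), monomial d (MvPolynomial.coeff d F)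
        with hGdef
      set H : MvPolynomial (Fin c) R :=
        ∑ d ∈ F.support.filter (fun d => ¬ d tt = 0),
          monomial (d - Finsupp.single tt 1) (MvPolynomial.coeff d F) with hHdef
      have hX : (X tt : MvPolynomial (Fin c) R) = monomial (Finsupp.single tt 1) 1 := rfl
      have hFGH : F = G + X tt * H := by
        conv_lhs => rw [F.as_sum]
        rw [← Finset.sum_filter_add_sum_filter_not F.support (fun d => d tt = 0)]
        congr 1
        rw [Finset.mul_sum]
        refine Finset.sum_congr rfl fun d hd => ?_
        have hdt : ¬ d tt = 0 := (Finset.mem_filter.mp hd).2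
        have hrec : Finsupp.single tt 1 + (d - Finsupp.single tt 1) = d := by
          ext i
          rcases eq_or_ne i tt with rfl | hne
          · simp only [Finsupp.add_apply, Finsupp.single_eq_same, Finsupp.tsub_apply]
            omega
          · simp [Finsupp.single_eq_of_ne' (Ne.symm hne), Finsupp.tsub_apply]
        rw [hX, MvPolynomial.monomial_mul, one_mul, hrec]
      have hsupG : ∀ e, MvPolynomial.coeff e G ≠ 0 → e ∈ F.support ∧ e tt = 0 := by
        intro e he
        rw [hGdef, MvPolynomial.coeff_sum] at he
        obtain ⟨a, ha, hne⟩ := Finset.exists_ne_zero_of_sum_ne_zero he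
        rw [MvPolynomial.coeff_monomial] at hne
        by_cases hae : a = e
        · subst hae
          exact ⟨(Finset.mem_filter.mp ha).1, (Finset.mem_filter.mp ha).2⟩
        · rw [if_neg hae] at hne; exact absurd rfl hne
      have hsupH : ∀ e, MvPolynomial.coeff e H ≠ 0 →
          ∃ d, (d ∈ F.support ∧ ¬ d tt = 0) ∧ e = d - Finsupp.single tt 1 := by
        intro e he
        rw [hHdef, MvPolynomial.coeff_sum] at he
        obtain ⟨a, ha, hne⟩ := Finset.exists_ne_zero_of_sum_ne_zero he
        rw [MvPolynomial.coeff_monomial] at hne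
        by_cases hae : a - Finsupp.single tt 1 = e
        · exact ⟨a, ⟨(Finset.mem_filter.mp ha).1, (Finset.mem_filter.mp ha).2⟩, hae.symm⟩
        · rw [if_neg hae] at hne; exact absurd rfl hne
      have hGhom : G.IsHomogeneous (dg + 1) :=
        MvPolynomial.IsHomogeneous.sum _ _ _ fun d hd =>
          MvPolynomial.isHomogeneous_monomial _
            (hom_degree hF (MvPolynomial.mem_support_iff.mp (Finset.mem_filter.mp hd).1))
      have hHhom : H.IsHomogeneous dg :=
        MvPolynomial.IsHomogeneous.sum _ _ _ fun d hd => by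
          have h1 := Finset.mem_filter.mp hd
          refine MvPolynomial.isHomogeneous_monomial _ ?_
          have h2 := degree_sub_single (d := d) (j := tt) h1.2
          have h3 := hom_degree hF (MvPolynomial.mem_support_iff.mp h1.1)
          omega
      have hGvars : VarsLt t G := by
        intro e he j hj
        obtain ⟨heF, het⟩ := hsupG e he
        have hjt1 : (j : ℕ) < t + 1 := hv e (MvPolynomial.mem_support_iff.mp heF) j hj
        have hjne : j ≠ tt := by
          intro h
          rw [h] at hj
          exact hj het
        have : (j : ℕ) ≠ t := fun h => hjne (Fin.ext h)
        omega
      have hHvars : VarsLt (t + 1) H := by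
        intro e he j hj
        obtain ⟨d, ⟨hdF, _⟩, rfl⟩ := hsupH e he
        refine hv d (MvPolynomial.mem_support_iff.mp hdF) j ?_
        intro h
        apply hj
        rw [Finsupp.tsub_apply, h]
        simp
      have hevG : MvPolynomial.eval x G ∈ Jt x t ^ (dg + 1) := eval_mem x hGhom hGvars
      have heval : MvPolynomial.eval x F =
          MvPolynomial.eval x G + x tt * MvPolynomial.eval x H := by
        conv_lhs => rw [hFGH]
        rw [_root_.map_add, _root_.map_mul, MvPolynomial.eval_X]
      obtain ⟨j1, hj1, z, hz, hsum⟩ := Submodule.mem_sup.mp (P1 (dg + 1) hev)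
      obtain ⟨v, hv1, hzv⟩ := Ideal.mem_span_singleton_mul.mp hz
      have h1 : x tt * (MvPolynomial.eval x H - v) ∈ Jt x t ^ (dg + 1) := by
        have heq : x tt * (MvPolynomial.eval x H - v) = j1 - MvPolynomial.eval x G := by
          linear_combination - heval - hsum - hzv
        rw [heq]
        exact sub_mem (Ideal.pow_le_pow_right (Nat.le_succ _) hj1) hevG
      have h2 : MvPolynomial.eval x H - v ∈ Jt x t ^ (dg + 1) := hW (dg + 1) _ h1
      have hevH : MvPolynomial.eval x H ∈ Jt x (t + 1) ^ (dg + 1) := by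
        have hJI : Jt x t ^ (dg + 1) ≤ Jt x (t + 1) ^ (dg + 1) :=
          Ideal.pow_right_mono (Jt_mono x (Nat.le_succ t)) _
        have hadd := add_mem (hJI h2) hv1
        rwa [sub_add_cancel] at hadd
      have hcH : ∀ d, MvPolynomial.coeff d H ∈ Jt x (t + 1) := IHdg H hHhom hHvars hevH
      have hevH2 : MvPolynomial.eval x H ∈ Jt x (t + 1) ^ (dg + 1) := by
        have := eval_mem_mul x hHhom hHvars hcH
        rwa [← pow_succ'] at this
      have hevG2 : MvPolynomial.eval x G ∈ Jt x (t + 1) ^ (dg + 1 + 1) := by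
        have hxtH : x tt * MvPolynomial.eval x H ∈ Jt x (t + 1) ^ (dg + 1 + 1) := by
          have := Ideal.mul_mem_mul (x_mem_Jt x (show ((tt : Fin c) : ℕ) < t + 1
            from Nat.lt_succ_self t)) hevH2
          rwa [← pow_succ'] at this
        have heq : MvPolynomial.eval x G =
            MvPolynomial.eval x F - x tt * MvPolynomial.eval x H := by
          linear_combination - heval
        rw [heq]
        exact sub_mem hev hxtH
      obtain ⟨j2, hj2, z2, hz2, hsum2⟩ := Submodule.mem_sup.mp (P1 (dg + 1) hevG2)
      obtain ⟨v2, hv2I, hz2v⟩ := Ideal.mem_span_singleton_mul.mp hz2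
      have h3 : x tt * v2 ∈ Jt x t ^ (dg + 1) := by
        have heq : x tt * v2 = MvPolynomial.eval x G - j2 := by
          linear_combination hsum2 + hz2v
        rw [heq]
        exact sub_mem hevG (Ideal.pow_le_pow_right (Nat.le_succ _) hj2)
      have hv2J : v2 ∈ Jt x t ^ (dg + 1) := hW (dg + 1) v2 h3
      obtain ⟨V, hVhom, hVvars, hVe⟩ := pow_le_formIdeal x t (dg + 1) hv2J
      have hG'hom : (G - C (x tt) * V).IsHomogeneous (dg + 1) :=
        hGhom.sub (by simpa using (MvPolynomial.isHomogeneous_C _ (x tt)).mul hVhom)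
      have hG'vars : VarsLt t (G - C (x tt) * V) :=
        varsLt_sub hGvars (varsLt_C_mul _ hVvars)
      have hG'ev : MvPolynomial.eval x (G - C (x tt) * V) ∈ Jt x t ^ (dg + 1 + 1) := by
        have heq : MvPolynomial.eval x (G - C (x tt) * V) = j2 := by
          rw [_root_.map_sub, _root_.map_mul, _root_.MvPolynomial.eval_C, hVe]
          linear_combination - hsum2 - hz2v
        rw [heq]
        exact hj2
      have hcG' := IH (dg + 1) _ hG'hom hG'vars hG'ev
      have hcG : ∀ d, MvPolynomial.coeff d G ∈ Jt x (t + 1) := by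
        intro d
        have h := hcG' d
        rw [MvPolynomial.coeff_sub, MvPolynomial.coeff_C_mul] at h
        have heq : MvPolynomial.coeff d G =
            (MvPolynomial.coeff d G - x tt * MvPolynomial.coeff d V) +
              x tt * MvPolynomial.coeff d V := by ring
        rw [heq]
        exact add_mem (Jt_mono x (Nat.le_succ t) h)
          (Ideal.mul_mem_right _ _ (x_mem_Jt x (Nat.lt_succ_self t)))
      intro d
      rw [hFGH, MvPolynomial.coeff_add]
      refine add_mem (hcG d) ?_
      rw [MvPolynomial.coeff_X_mul']
      split
      · exact hcH _
      · exact zero_mem _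

end ColonRegAux

/-- for a regular sequence `x_1, ..., x_r` and every `k ≥ 1`,
`(x_1^k, ..., x_r^k) : (x_1 x_2 ⋯ x_r)^{k-1} = (x_1, ..., x_r)`. -/
theorem colon_identity_of_regular_sequence
    {R : Type*} [CommRing R] [IsNoetherianRing R] {r : ℕ} (x : Fin r → R)
    (hreg : IsRegSeq x) :
    ∀ k : ℕ, 1 ≤ k →
      (Ideal.span (Set.range fun i => x i ^ k)).colon
          (Ideal.span {(∏ i, x i) ^ (k - 1)}) = Ideal.span (Set.range x) := by
  intro k hk
  apply le_antisymm
  · intro u hu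
    rw [Ideal.mem_colon_span_singleton] at hu
    rcases eq_or_lt_of_le hk with hk1 | hk2
    · subst hk1
      simpa using hu
    · have hk2' : 2 ≤ k := hk2
      obtain ⟨m, rfl⟩ : ∃ m, k = m + 1 := ⟨k - 1, by omega⟩
      have hm1 : 1 ≤ m := by omega
      simp only [Nat.add_sub_cancel] at hu
      rcases Nat.lt_or_ge r 2 with hr | hr
      · interval_cases r
        · have h1 : Set.range x = ∅ := Set.range_eq_empty x
          rw [h1, Ideal.span_empty]
          have h2 : Set.range (fun i : Fin 0 => x i ^ (m + 1)) = ∅ := Set.range_eq_empty _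
          rw [h2, Ideal.span_empty] at hu
          rw [Finset.univ_eq_empty, Finset.prod_empty, one_pow, mul_one] at hu
          exact hu
        · obtain ⟨cf, hcf⟩ := Ideal.mem_span_range_iff_exists_fun.mp hu
          rw [Fin.sum_univ_one] at hcf
          rw [Fin.prod_univ_one] at hu hcf
          have hbot : prevSpan x 0 = ⊥ := by
            unfold prevSpan
            rw [show {j : Fin 1 | j < 0} = ∅ from Set.eq_empty_of_forall_notMem
              (fun j hj => by simp [Fin.lt_def] at hj), Set.image_empty, Ideal.span_empty]
          have hnz : ∀ y : R, y * x 0 = 0 → y = 0 := by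
            intro y h
            have h2 := hreg.2 0 y (by rw [hbot]; exact Ideal.mem_bot.mpr h)
            rw [hbot] at h2
            exact Ideal.mem_bot.mp h2
          have hcancel : ∀ (p : ℕ) (y : R), y * x 0 ^ p = 0 → y = 0 := by
            intro p
            induction p with
            | zero => intro y h; simpa using h
            | succ p IHp =>
              intro y h
              rw [pow_succ, ← mul_assoc] at h
              exact IHp y (hnz _ h)
          have hsub : (u - cf 0 * x 0) * x 0 ^ m = 0 := by
            linear_combination - hcf
          have hzero := hcancel _ _ hsub
          have hu2 : u = cf 0 * x 0 := by linear_combination hzero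
          rw [hu2]
          exact Ideal.mul_mem_left _ (cf 0) (Ideal.subset_span ⟨0, rfl⟩)
      · -- r ≥ 2
        have hkn : m + 1 ≤ r * m := by
          calc m + 1 ≤ 2 * m := by omega
            _ ≤ r * m := Nat.mul_le_mul_right m hr
        have hvn : u * (∏ i, x i) ^ m ∈ ColonRegAux.Jt x r ^ (r * m) := by
          rw [← Finset.prod_pow]
          refine Ideal.mul_mem_left _ u ?_
          have hpm := ColonRegAux.prod_pow_mem x (J := ColonRegAux.Jt x r) (fun _ => m)
            Finset.univ (fun j _ => ColonRegAux.x_mem_Jt x j.isLt)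
          rwa [Finset.sum_const, Finset.card_univ, Fintype.card_fin, smul_eq_mul] at hpm
        have loop : ∀ p, m + 1 ≤ p → p ≤ r * m →
            ∃ F : MvPolynomial (Fin r) R, F.IsHomogeneous p ∧
              (∀ d, MvPolynomial.coeff d F ≠ 0 → ∃ j, m + 1 ≤ d j) ∧
              MvPolynomial.eval x F = u * (∏ i, x i) ^ m := by
          intro p hp1
          induction p, hp1 using Nat.le_induction with
          | base =>
            intro _
            obtain ⟨cf, hcf⟩ := Ideal.mem_span_range_iff_exists_fun.mp hu
            refine ⟨∑ i, MvPolynomial.monomial (Finsupp.single i (m + 1)) (cf i), ?_, ?_, ?_⟩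
            · exact MvPolynomial.IsHomogeneous.sum _ _ _ fun i _ =>
                MvPolynomial.isHomogeneous_monomial _ (ColonRegAux.degree_single _ _)
            · intro d hd
              rw [MvPolynomial.coeff_sum] at hd
              obtain ⟨i, _, hne⟩ := Finset.exists_ne_zero_of_sum_ne_zero hd
              rw [MvPolynomial.coeff_monomial] at hne
              refine ⟨i, ?_⟩
              by_cases he : Finsupp.single i (m + 1) = d
              · rw [← he, Finsupp.single_eq_same]
              · rw [if_neg he] at hne; exact absurd rfl hne
            · rw [_root_.map_sum, ← hcf]
              refine Finset.sum_congr rfl fun i _ => ?_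
              rw [MvPolynomial.eval_monomial,
                Finsupp.prod_single_index (h := fun n e => x n ^ e) (pow_zero _)]
          | succ p hp IHp =>
            intro hpn
            obtain ⟨F, hFhom, hFco, hFev⟩ := IHp (by omega)
            have hvtriv : ColonRegAux.VarsLt r F := fun d hd j hj => j.isLt
            have hevp : MvPolynomial.eval x F ∈ ColonRegAux.Jt x r ^ (p + 1) := by
              rw [hFev]
              exact Ideal.pow_le_pow_right (by omega) hvn
            have hco := ColonRegAux.quasiReg x hreg r le_rfl p F hFhom hvtriv hevp
            rw [ColonRegAux.Jt_c_eq] at hco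
            choose w hw using fun d => Ideal.mem_span_range_iff_exists_fun.mp (hco d)
            refine ⟨∑ d ∈ F.support, ∑ j,
              MvPolynomial.monomial (d + Finsupp.single j 1) (w d j), ?_, ?_, ?_⟩
            · refine MvPolynomial.IsHomogeneous.sum _ _ _ fun d hd =>
                MvPolynomial.IsHomogeneous.sum _ _ _ fun j _ =>
                  MvPolynomial.isHomogeneous_monomial _ ?_
              rw [ColonRegAux.degree_add, ColonRegAux.degree_single,
                ColonRegAux.hom_degree hFhom (MvPolynomial.mem_support_iff.mp hd)]
            · intro e he
              rw [MvPolynomial.coeff_sum] at he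
              obtain ⟨d, hd, hne⟩ := Finset.exists_ne_zero_of_sum_ne_zero he
              rw [MvPolynomial.coeff_sum] at hne
              obtain ⟨j, _, hne2⟩ := Finset.exists_ne_zero_of_sum_ne_zero hne
              rw [MvPolynomial.coeff_monomial] at hne2
              have hde : d + Finsupp.single j 1 = e := by
                by_contra hcon
                rw [if_neg hcon] at hne2
                exact hne2 rfl
              obtain ⟨j0, hj0⟩ := hFco d (MvPolynomial.mem_support_iff.mp hd)
              refine ⟨j0, ?_⟩
              rw [← hde, Finsupp.add_apply]
              omega
            · rw [_root_.map_sum, ← hFev, MvPolynomial.eval_eq]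
              refine Finset.sum_congr rfl fun d hd => ?_
              rw [_root_.map_sum]
              have hterm : (∑ j, MvPolynomial.eval x
                  (MvPolynomial.monomial (d + Finsupp.single j 1) (w d j))) =
                  (∑ j, w d j * x j) * (∏ i ∈ d.support, x i ^ d i) := by
                rw [Finset.sum_mul]
                refine Finset.sum_congr rfl fun j _ => ?_
                rw [MvPolynomial.eval_monomial,
                  Finsupp.prod_add_index' (h := fun n e => x n ^ e) (fun a => pow_zero (x a))
                    (fun a b1 b2 => pow_add (x a) b1 b2),
                  Finsupp.prod_single_index (h := fun n e => x n ^ e) (pow_zero (x j)), pow_one]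
                have hpr : d.prod (fun i e => x i ^ e) = ∏ i ∈ d.support, x i ^ d i := rfl
                rw [hpr]
                ring
              rw [hterm, hw d]
        obtain ⟨F, hFhom, hFco, hFev⟩ := loop (r * m) hkn le_rfl
        set d0 : Fin r →₀ ℕ := Finsupp.equivFunOnFinite.symm (fun _ => m) with hd0
        have hd0app : ∀ j, d0 j = m := fun j => rfl
        have hd0deg : d0.degree = r * m := by
          rw [ColonRegAux.degree_eq_sum]
          simp only [hd0app]
          rw [Finset.sum_const, Finset.card_univ, Fintype.card_fin, smul_eq_mul]
        have hGhom : (MvPolynomial.monomial d0 u - F).IsHomogeneous (r * m) :=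
          (MvPolynomial.isHomogeneous_monomial u hd0deg).sub hFhom
        have hGev : MvPolynomial.eval x (MvPolynomial.monomial d0 u - F) = 0 := by
          rw [_root_.map_sub, hFev, MvPolynomial.eval_monomial, sub_eq_zero]
          congr 1
          have h1 : d0.prod (fun i e => x i ^ e) = ∏ i, x i ^ d0 i :=
            Finsupp.prod_fintype _ _ (fun i => pow_zero _)
          rw [h1]
          simp only [hd0app]
          rw [Finset.prod_pow]
        have hco := ColonRegAux.quasiReg x hreg r le_rfl (r * m) _ hGhom
          (fun d hd j hj => j.isLt) (by rw [hGev]; exact zero_mem _) d0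
        rw [ColonRegAux.Jt_c_eq] at hco
        rw [MvPolynomial.coeff_sub, MvPolynomial.coeff_monomial, if_pos rfl] at hco
        have hcF : MvPolynomial.coeff d0 F = 0 := by
          by_contra hcon
          obtain ⟨j, hj⟩ := hFco d0 hcon
          rw [hd0app] at hj
          omega
        rw [hcF, sub_zero] at hco
        exact hco
  · rw [Ideal.span_le]
    rintro _ ⟨i, rfl⟩
    rw [SetLike.mem_coe, Ideal.mem_colon_span_singleton]
    rw [← Finset.prod_pow,
      ← Finset.mul_prod_erase Finset.univ (fun j => x j ^ (k - 1)) (Finset.mem_univ i),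
      ← mul_assoc]
    have hstep : x i * x i ^ (k - 1) = x i ^ k := by
      rw [← pow_succ']
      congr 1
      omega
    rw [hstep]
    exact Ideal.mul_mem_right _ _ (Ideal.subset_span ⟨i, rfl⟩)
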